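/- The spectral radius of the next-generation matrix FV⁻¹, where F = [[0, φ_w(K - Q*)(1-ρ₂)/K],[0,0]] and V = [[μ_a+ψ, 0],[-ψ/2, μ_w]], with Q* = K(1 - 1/R_{0w̄}), equals φ_w μ_w̄ (1-ρ₂)/(φ_w̄ μ_w). -/

import Mathlib

open Polynomial Matrix

lemma my_charpoly (a b : ℂ) : (!![a,b;(0:ℂ),0]).charpoly = X * (X - C a) := by
  rw [Matrix.charpoly, Matrix.det_fin_two]
  simp [charmatrix_apply_eq, charmatrix_apply_ne]
  ring

theorem stmt_1 (φwb φw ψ μa μwb μw K ρ2 : ℝ)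
    (hφwb : 0 < φwb) (hφw : 0 < φw) (hψ : 0 < ψ) (hμa : 0 < μa)
    (hμwb : 0 < μwb) (hμw : 0 < μw) (hK : 0 < K)
    (hρ2 : ρ2 ∈ Set.Ico (0:ℝ) 1)
    (R0wb : ℝ) (hR0wb : R0wb = φwb * ψ / (2 * μwb * (μa + ψ))) (hR : 1 < R0wb)
    (Qs : ℝ) (hQs : Qs = K * (1 - 1 / R0wb))
    (F V : Matrix (Fin 2) (Fin 2) ℝ)
    (hF : F = !![0, φw * (K - Qs) * (1 - ρ2) / K; 0, 0])
    (hV : V = !![μa + ψ, 0; -(ψ / 2), μw]) :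
    IsGreatest {r : ℝ | ∃ z : ℂ,
        ((F * V⁻¹).map (Complex.ofReal)).charpoly.eval z = 0 ∧ r = ‖z‖}
      (φw * μwb * (1 - ρ2) / (φwb * μw)) := by
  set a : ℝ := φw * μwb * (1 - ρ2) / (φwb * μw) with ha
  set b : ℝ := φw * (K - Qs) * (1 - ρ2) / (K * μw) with hb
  have hμaψ : 0 < μa + ψ := by linarith
  have hRne : R0wb ≠ 0 := by linarith
  have hdetV : V.det = (μa + ψ) * μw := by
    rw [hV, Matrix.det_fin_two_of]; ring
  have hdetV' : IsUnit V.det := by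
    rw [hdetV]; exact (mul_pos hμaψ hμw).ne'.isUnit
  have := V.invertibleOfIsUnitDet hdetV'
  have hM : F * V⁻¹ = !![a, b; 0, 0] := by
    rw [Matrix.mul_inv_eq_iff_eq_mul_of_invertible]
    rw [hF, hV, Matrix.mul_fin_two]
    subst hQs hR0wb
    ext i j
    fin_cases i <;> fin_cases j <;>
      simp [ha, hb] <;> field_simp <;> ring
  rw [hM]
  have hmap : (!![a, b; (0:ℝ), 0]).map (Complex.ofReal) = !![(a:ℂ), b; 0, 0] := by
    ext i j; fin_cases i <;> fin_cases j <;> simp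
  rw [hmap, my_charpoly]
  have ha0 : 0 ≤ a := by
    apply div_nonneg
    · have : 0 ≤ 1 - ρ2 := by linarith [hρ2.2]
      positivity
    · positivity
  constructor
  · exact ⟨(a:ℂ), by simp, by rw [Complex.norm_real, Real.norm_of_nonneg ha0]⟩
  · rintro r ⟨z, hz, rfl⟩
    simp only [eval_mul, eval_sub, eval_X, eval_C, mul_eq_zero, sub_eq_zero] at hz
    rcases hz with rfl | rfl
    · simpa using ha0
    · rw [Complex.norm_real, Real.norm_of_nonneg ha0]
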